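/- Let 1 ≤ K ≤ N and for i ∈ {1,…,K} let Λ_i = diag(e^{j2πn(i−1)/N})_{n=0}^{N−1}. Let Δx ∈ ℂ^N be such that (Δx)_k ≠ 0 for all k ∈ {1,…,N}. Then the N×K matrix Φ(Δx) = [Λ_1Δx Λ_2Δx ⋯ Λ_KΔx] has rank K. -/

import Mathlib

open Matrix

/-- The diagonal matrix `Λ_i = diag(e^{j 2π n (i-1)/N})_{n=0}^{N-1}`. -/
noncomputable def phaseMatrix (N i : ℕ) : Matrix (Fin N) (Fin N) ℂ :=
  Matrix.diagonal fun n =>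
    Complex.exp (2 * Real.pi * Complex.I * (n : ℕ) * ((i - 1 : ℕ) : ℂ) / N)

theorem stmt5 (N K : ℕ) (hK : 1 ≤ K) (hKN : K ≤ N) (Δx : Fin N → ℂ)
    (hΔx : ∀ k : Fin N, Δx k ≠ 0) :
    (Matrix.of fun (n : Fin N) (i : Fin K) =>
        (phaseMatrix N ((i : ℕ) + 1) *ᵥ Δx) n).rank = K := by
  have hN : (0 : ℕ) < N := lt_of_lt_of_le hK hKN
  set ζ : ℂ := Complex.exp (2 * Real.pi * Complex.I / N) with hζdef
  have hζ : IsPrimitiveRoot ζ N := Complex.isPrimitiveRoot_exp N hN.ne'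
  set A : Matrix (Fin N) (Fin K) ℂ :=
    Matrix.of fun (n : Fin N) (i : Fin K) => (phaseMatrix N ((i : ℕ) + 1) *ᵥ Δx) n with hAdef
  have hA : ∀ (n : Fin N) (i : Fin K), A n i = (ζ ^ (n : ℕ)) ^ (i : ℕ) * Δx n := by
    intro n i
    have h1 : (ζ ^ (n : ℕ)) ^ (i : ℕ) = ζ ^ ((n : ℕ) * (i : ℕ)) := by rw [pow_mul]
    have h2 : ζ ^ ((n : ℕ) * (i : ℕ)) =
        Complex.exp (2 * Real.pi * Complex.I * (n : ℕ) * (((i : ℕ) + 1 - 1 : ℕ) : ℂ) / N) := by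
      rw [hζdef, ← Complex.exp_nat_mul]
      congr 1
      have : ((i : ℕ) + 1 - 1 : ℕ) = (i : ℕ) := by omega
      rw [this]
      push_cast
      ring
    simp only [hAdef, Matrix.of_apply, phaseMatrix, Matrix.mulVec_diagonal]
    rw [h1, h2]
  rw [← Matrix.rank_transpose]
  have hli : LinearIndependent ℂ Aᵀ.row := by
    rw [Fintype.linearIndependent_iff]
    intro g hg i
    have hsum : ∀ m : Fin K, ∑ j : Fin K, (ζ ^ ((m : ℕ))) ^ (j : ℕ) * g j = 0 := by
      intro m
      have hn := congrFun hg (Fin.castLE hKN m)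
      simp only [Finset.sum_apply, Pi.smul_apply, Matrix.row, Matrix.transpose_apply, smul_eq_mul,
        Pi.zero_apply] at hn
      have : (∑ j : Fin K, (ζ ^ ((m : ℕ))) ^ (j : ℕ) * g j) * Δx (Fin.castLE hKN m) = 0 := by
        rw [Finset.sum_mul, ← hn]
        refine Finset.sum_congr rfl fun j _ => ?_
        rw [hA (Fin.castLE hKN m) j]
        simp [Fin.coe_castLE]
        ring
      exact (mul_eq_zero.mp this).resolve_right (hΔx _)
    have hf : Function.Injective (fun m : Fin K => ζ ^ (m : ℕ)) := by
      intro a b hab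
      have := hζ.pow_inj (lt_of_lt_of_le a.isLt hKN) (lt_of_lt_of_le b.isLt hKN) hab
      exact Fin.ext this
    have := Matrix.eq_zero_of_forall_index_sum_pow_mul_eq_zero hf hsum
    exact congrFun this i
  rw [hli.rank_matrix, Fintype.card_fin]
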